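/- Let G be a group and let N ≤ M be normal subgroups of G. Suppose E ⋖ F is a cover relation in the subgroup lattice of G that is weakly separated by M/N, i.e. N ⊓ E = N ⊓ F and M ⊔ E = M ⊔ F. Set ρ(E) = (N ⊔ E) ⊓ M and ρ(F) = (N ⊔ F) ⊓ M. Then ρ(E) < ρ(F), and for every subgroup K of G with ρ(E) ≤ K ≤ ρ(F) and E ≤ N_G(K), either K = ρ(E) or K = ρ(F); that is, ρ(E) ⋖ ρ(F) is a cover relation in the lattice of E-normalized subgroups between N and M. -/

import Mathlib

open scoped Pointwise

/-- If `E` normalizes `K`, every element of `K ⊔ E` is a product `k * e`. -/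
lemma exists_mul_of_mem_sup_normalizer {G : Type*} [Group G] {K E : Subgroup G}
    (hE : E ≤ Subgroup.normalizer (K : Set G)) {x : G} (hx : x ∈ K ⊔ E) :
    ∃ k ∈ K, ∃ e ∈ E, k * e = x := by
  rw [Subgroup.sup_eq_closure_mul] at hx
  induction hx using Subgroup.closure_induction'' with
  | one => exact ⟨1, one_mem _, 1, one_mem _, one_mul 1⟩
  | mem x hx =>
      obtain ⟨k, hk, e, he, rfl⟩ := hx
      exact ⟨k, hk, e, he, rfl⟩
  | inv_mem x hx =>
      obtain ⟨k, hk, e, he, rfl⟩ := hx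
      refine ⟨e⁻¹ * k⁻¹ * e, ?_, e⁻¹, inv_mem he, by group⟩
      have := (Subgroup.mem_normalizer_iff.mp (inv_mem (hE he)) k⁻¹).mp (inv_mem hk)
      simpa using this
  | mul x y hx hy ihx ihy =>
      obtain ⟨k, hk, e, he, rfl⟩ := ihx
      obtain ⟨k', hk', e', he', rfl⟩ := ihy
      refine ⟨k * (e * k' * e⁻¹), mul_mem hk ?_, e * e', mul_mem he he', by group⟩
      exact (Subgroup.mem_normalizer_iff.mp (hE he) k').mp hk'

/-- If `E ⋖ F` is a cover relation in the subgroup lattice of `G` weakly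
separated by `M/N` (for normal subgroups `N ≤ M`), then
`ρ(E) ⋖ ρ(F)` is a cover relation in the lattice of `E`-normalized subgroups
between `N` and `M`, where `ρ(H) = (N ⊔ H) ⊓ M`. -/
theorem projection_covers {G : Type*} [Group G]
    (N M : Subgroup G) (hN : N.Normal) (hM : M.Normal) (hNM : N ≤ M)
    (E F : Subgroup G) (hcov : E ⋖ F)
    (hmeet : N ⊓ E = N ⊓ F) (hjoin : M ⊔ E = M ⊔ F) :
    (N ⊔ E) ⊓ M < (N ⊔ F) ⊓ M ∧
      ∀ K : Subgroup G, (N ⊔ E) ⊓ M ≤ K → K ≤ (N ⊔ F) ⊓ M →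
        E ≤ Subgroup.normalizer (K : Set G) → K = (N ⊔ E) ⊓ M ∨ K = (N ⊔ F) ⊓ M := by
  have hEF : E ≤ F := hcov.1.le
  have hle : (N ⊔ E) ⊓ M ≤ (N ⊔ F) ⊓ M :=
    inf_le_inf_right M (sup_le_sup_left hEF N)
  -- decomposition of elements of `N ⊔ H` for `N` normal
  have hdec : ∀ (H : Subgroup G) (x : G), x ∈ N ⊔ H → ∃ n ∈ N, ∃ h ∈ H, n * h = x := by
    intro H x hx
    have : x ∈ ((N : Set G) * (H : Set G)) := by
      rw [← Subgroup.normal_mul]; exact hx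
    obtain ⟨n, hn, h, hh, rfl⟩ := this
    exact ⟨n, hn, h, hh, rfl⟩
  constructor
  · refine lt_of_le_of_ne hle fun heq => ?_
    -- if the projections coincide, then `F ≤ E`, contradicting `E ⋖ F`
    have hFE : F ≤ E := by
      intro f hf
      have hfME : f ∈ M ⊔ E := by rw [hjoin]; exact Subgroup.mem_sup_right hf
      have : f ∈ ((M : Set G) * (E : Set G)) := by rw [← Subgroup.normal_mul]; exact hfME
      obtain ⟨m, hm, e, he, rfl⟩ := this
      have hmF : m ∈ F := by
        have : (m * e) * e⁻¹ ∈ F := mul_mem hf (inv_mem (hEF he))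
        simpa using this
      have hmρF : m ∈ (N ⊔ F) ⊓ M := ⟨Subgroup.mem_sup_right hmF, hm⟩
      rw [← heq] at hmρF
      obtain ⟨n, hn, e', he', hne⟩ := hdec E m hmρF.1
      have hnF : n ∈ F := by
        have : m * (e')⁻¹ ∈ F := mul_mem hmF (inv_mem (hEF he'))
        rw [← hne] at this; simpa using this
      have hnE : n ∈ E := ((hmeet ▸ (⟨hn, hnF⟩ : n ∈ N ⊓ F)) : n ∈ N ⊓ E).2
      have : m ∈ E := by rw [← hne]; exact mul_mem hnE he'
      exact mul_mem this he
    exact (not_le_of_gt hcov.1) hFE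
  · intro K hEK hKF hnorm
    have hNK : N ≤ K := fun n hn => hEK ⟨Subgroup.mem_sup_left hn, hNM hn⟩
    have hKM : K ≤ M := fun k hk => (hKF hk).2
    have hEMK : E ⊓ M ≤ K := fun x hx => hEK ⟨Subgroup.mem_sup_right hx.1, hx.2⟩
    -- the pulled-back subgroup `(K ⊔ E) ⊓ F` lies in `[E, F]`
    have hEL : E ≤ (K ⊔ E) ⊓ F := le_inf le_sup_right hEF
    rcases hcov.eq_or_eq hEL inf_le_right with hL | hL
    · -- case `(K ⊔ E) ⊓ F = E` : show `K ≤ (N ⊔ E) ⊓ M`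
      left
      refine le_antisymm (fun k hk => ?_) hEK
      obtain ⟨n, hn, f, hf, hnf⟩ := hdec F k (hKF hk).1
      have hfK : f ∈ K := by
        have : n⁻¹ * k ∈ K := mul_mem (inv_mem (hNK hn)) hk
        rw [← hnf] at this; simpa using this
      have hfE : f ∈ E := by
        rw [← hL]; exact ⟨Subgroup.mem_sup_left hfK, hf⟩
      refine ⟨?_, hKM hk⟩
      rw [← hnf]; exact mul_mem (Subgroup.mem_sup_left hn) (Subgroup.mem_sup_right hfE)
    · -- case `(K ⊔ E) ⊓ F = F` : show `(N ⊔ F) ⊓ M ≤ K`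
      right
      refine le_antisymm hKF fun x hx => ?_
      have hFKE : F ≤ K ⊔ E := by rw [← hL]; exact inf_le_left
      have hxKE : x ∈ K ⊔ E := by
        obtain ⟨n, hn, f, hf, hnf⟩ := hdec F x hx.1
        rw [← hnf]
        exact mul_mem (Subgroup.mem_sup_left (hNK hn)) (hFKE hf)
      obtain ⟨k, hk, e, he, hke⟩ := exists_mul_of_mem_sup_normalizer hnorm hxKE
      have heM : e ∈ M := by
        have : k⁻¹ * x ∈ M := mul_mem (inv_mem (hKM hk)) hx.2
        rw [← hke] at this; simpa using this
      have heK : e ∈ K := hEMK ⟨he, heM⟩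
      rw [← hke]; exact mul_mem hk heK
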